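/- On ℝ⁴ with coordinates (x,y,z,w), let k > 0 and consider the SU(2) frame X1(p) = k·(z, −w, −x, y), X2(p) = k·(w, z, −y, −x), X0(p) = 2k²·(−y, x, −w, z). Let f(x,y,z,w) = w, m = √((X1f)² + (X2f)²) = k√(x²+y²), and F = X0(f)/m = 2kz/√(x²+y²) (smooth on {(x,y) ≠ (0,0)}). Define X_S acting on smooth functions u by X_S(u) = ((X2f)·X1(u) − (X1f)·X2(u))/m. Then at every point p with w = 0 and (x,y) ≠ (0,0): 2·X_S(F)(p) − F(p)² = 4k². -/

import Mathlib

private def LL1 : (ℝ × ℝ × ℝ × ℝ) →L[ℝ] ℝ := ContinuousLinearMap.fst ℝ ℝ (ℝ × ℝ × ℝ)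
private def LL2 : (ℝ × ℝ × ℝ × ℝ) →L[ℝ] ℝ :=
  (ContinuousLinearMap.fst ℝ ℝ (ℝ × ℝ)).comp (ContinuousLinearMap.snd ℝ ℝ (ℝ × ℝ × ℝ))
private def LL3 : (ℝ × ℝ × ℝ × ℝ) →L[ℝ] ℝ :=
  ((ContinuousLinearMap.fst ℝ ℝ ℝ).comp (ContinuousLinearMap.snd ℝ ℝ (ℝ × ℝ))).comp
    (ContinuousLinearMap.snd ℝ ℝ (ℝ × ℝ × ℝ))
private def LL4 : (ℝ × ℝ × ℝ × ℝ) →L[ℝ] ℝ :=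
  ((ContinuousLinearMap.snd ℝ ℝ ℝ).comp (ContinuousLinearMap.snd ℝ ℝ (ℝ × ℝ))).comp
    (ContinuousLinearMap.snd ℝ ℝ (ℝ × ℝ × ℝ))

@[simp] private lemma LL1_apply (q : ℝ × ℝ × ℝ × ℝ) : LL1 q = q.1 := rfl
@[simp] private lemma LL2_apply (q : ℝ × ℝ × ℝ × ℝ) : LL2 q = q.2.1 := rfl
@[simp] private lemma LL3_apply (q : ℝ × ℝ × ℝ × ℝ) : LL3 q = q.2.2.1 := rfl
@[simp] private lemma LL4_apply (q : ℝ × ℝ × ℝ × ℝ) : LL4 q = q.2.2.2 := rfl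

set_option maxHeartbeats 1000000 in
/-- for the `SU(2)` frame `X1 = k(z,−w,−x,y)`, `X2 = k(w,z,−y,−x)`,
`X0 = 2k²(−y,x,−w,z)` and the model surface `{w = 0}` with defining function `f = w`,
setting `m = √((X1f)² + (X2f)²)`, `F = X0f/m` and
`X_S(u) = ((X2f)·X1(u) − (X1f)·X2(u))/m`, at every point with `w = 0` and
`(x,y) ≠ (0,0)` one has `F = 2kz/√(x²+y²)` and `2·X_S(F) − F² = 4k²`. -/
theorem su2_model_surface_a3_integrand
    (k : ℝ) (hk : 0 < k)
    (X1 X2 X0 : ℝ × ℝ × ℝ × ℝ → ℝ × ℝ × ℝ × ℝ)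
    (hX1 : X1 = fun p => (k * p.2.2.1, -(k * p.2.2.2), -(k * p.1), k * p.2.1))
    (hX2 : X2 = fun p => (k * p.2.2.2, k * p.2.2.1, -(k * p.2.1), -(k * p.1)))
    (hX0 : X0 = fun p =>
      (-(2 * k ^ 2 * p.2.1), 2 * k ^ 2 * p.1, -(2 * k ^ 2 * p.2.2.2), 2 * k ^ 2 * p.2.2.1))
    (f : ℝ × ℝ × ℝ × ℝ → ℝ) (hf : f = fun p => p.2.2.2)
    (X1f X2f m F : ℝ × ℝ × ℝ × ℝ → ℝ)
    (hX1f : X1f = fun q => fderiv ℝ f q (X1 q))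
    (hX2f : X2f = fun q => fderiv ℝ f q (X2 q))
    (hm : m = fun q => Real.sqrt ((X1f q) ^ 2 + (X2f q) ^ 2))
    (hF : F = fun q => fderiv ℝ f q (X0 q) / m q)
    (p : ℝ × ℝ × ℝ × ℝ) (hw : p.2.2.2 = 0) (hxy : (p.1, p.2.1) ≠ ((0 : ℝ), (0 : ℝ))) :
    F p = 2 * k * p.2.2.1 / Real.sqrt (p.1 ^ 2 + p.2.1 ^ 2) ∧
    2 * ((X2f p * fderiv ℝ F p (X1 p) - X1f p * fderiv ℝ F p (X2 p)) / m p)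
        - (F p) ^ 2 = 4 * k ^ 2 := by
  have hfL4 : f = ⇑LL4 := by rw [hf]; rfl
  have hdf : ∀ q, fderiv ℝ f q = LL4 := by
    intro q; rw [hfL4]; exact LL4.fderiv
  have hX1f' : X1f = fun q => k * q.2.1 := by
    funext q; rw [hX1f]; simp [hdf, hX1]
  have hX2f' : X2f = fun q => -(k * q.1) := by
    funext q; rw [hX2f]; simp [hdf, hX2]
  have hm' : ∀ q : ℝ × ℝ × ℝ × ℝ, m q = k * Real.sqrt (q.1 ^ 2 + q.2.1 ^ 2) := by
    intro q
    rw [hm]; simp only [hX1f', hX2f']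
    rw [show (k * q.2.1) ^ 2 + (-(k * q.1)) ^ 2 = k ^ 2 * (q.1 ^ 2 + q.2.1 ^ 2) by ring,
      Real.sqrt_mul (sq_nonneg k), Real.sqrt_sq hk.le]
  have hFg : F = fun q : ℝ × ℝ × ℝ × ℝ =>
      2 * k * q.2.2.1 * (Real.sqrt (q.1 ^ 2 + q.2.1 ^ 2))⁻¹ := by
    funext q
    rw [hF]; simp only [hdf, hX0, hm']
    have h0 : (LL4 : (ℝ × ℝ × ℝ × ℝ) →L[ℝ] ℝ)
        (-(2 * k ^ 2 * q.2.1), 2 * k ^ 2 * q.1, -(2 * k ^ 2 * q.2.2.2), 2 * k ^ 2 * q.2.2.1)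
        = 2 * k ^ 2 * q.2.2.1 := rfl
    rw [h0]
    rcases eq_or_ne (Real.sqrt (q.1 ^ 2 + q.2.1 ^ 2)) 0 with h1 | h1
    · simp [h1]
    · field_simp
  obtain ⟨a, b, c, d⟩ := p
  simp only at hw hxy ⊢
  subst hw
  have hab : 0 < a ^ 2 + b ^ 2 := by
    rcases eq_or_ne a 0 with h1 | h1
    · have h2 : b ≠ 0 := fun h2 => hxy (by rw [h1, h2])
      positivity
    · positivity
  have hr : 0 < Real.sqrt (a ^ 2 + b ^ 2) := Real.sqrt_pos.mpr hab
  have hr2 : Real.sqrt (a ^ 2 + b ^ 2) ^ 2 = a ^ 2 + b ^ 2 := Real.sq_sqrt hab.le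
  set r := Real.sqrt (a ^ 2 + b ^ 2) with hrdef
  -- derivative of u = x² + y²
  have h1 : HasFDerivAt (fun q : ℝ × ℝ × ℝ × ℝ => q.1) LL1 (a, b, c, 0) := LL1.hasFDerivAt
  have h2 : HasFDerivAt (fun q : ℝ × ℝ × ℝ × ℝ => q.2.1) LL2 (a, b, c, 0) := LL2.hasFDerivAt
  have h3 : HasFDerivAt (fun q : ℝ × ℝ × ℝ × ℝ => q.2.2.1) LL3 (a, b, c, 0) := LL3.hasFDerivAt
  have hu : HasFDerivAt (fun q : ℝ × ℝ × ℝ × ℝ => q.1 ^ 2 + q.2.1 ^ 2)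
      ((a • LL1 + a • LL1) + (b • LL2 + b • LL2)) (a, b, c, 0) := by
    have ha' := h1.mul h1
    have hb' := h2.mul h2
    simp only [LL1_apply, LL2_apply] at ha' hb'
    have := ha'.add hb'
    simpa only [Pi.add_def, Pi.mul_def, sq] using this
  have hsq : HasFDerivAt (fun q : ℝ × ℝ × ℝ × ℝ => Real.sqrt (q.1 ^ 2 + q.2.1 ^ 2))
      ((1 / (2 * r)) • ((a • LL1 + a • LL1) + (b • LL2 + b • LL2))) (a, b, c, 0) :=
    hu.sqrt hab.ne'
  have hinv : HasFDerivAt (fun q : ℝ × ℝ × ℝ × ℝ => (Real.sqrt (q.1 ^ 2 + q.2.1 ^ 2))⁻¹)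
      ((-(r ^ 2)⁻¹) • ((1 / (2 * r)) • ((a • LL1 + a • LL1) + (b • LL2 + b • LL2))))
      (a, b, c, 0) := by
    have := (hasDerivAt_inv hr.ne').comp_hasFDerivAt (a, b, c, 0) hsq
    simpa [Function.comp_def] using this
  have hnum : HasFDerivAt (fun q : ℝ × ℝ × ℝ × ℝ => 2 * k * q.2.2.1) ((2 * k) • LL3)
      (a, b, c, 0) := h3.const_mul (2 * k)
  have hg : HasFDerivAt F
      ((2 * k * c) • ((-(r ^ 2)⁻¹) • ((1 / (2 * r)) •
          ((a • LL1 + a • LL1) + (b • LL2 + b • LL2))))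
        + r⁻¹ • ((2 * k) • LL3)) (a, b, c, 0) := by
    rw [hFg]
    have := hnum.mul hinv
    simpa [Pi.mul_def, ← hrdef] using this
  have hdF := hg.fderiv
  have hFp : F (a, b, c, 0) = 2 * k * c / r := by rw [hFg]; simp [div_eq_mul_inv, hrdef]
  refine ⟨hFp, ?_⟩
  rw [hdF, hX1, hX2, hX1f', hX2f', hm' (a, b, c, 0), hFp]
  simp only [ContinuousLinearMap.add_apply, ContinuousLinearMap.coe_smul',
    Pi.smul_apply, smul_eq_mul, LL1_apply, LL2_apply, LL3_apply]
  have hk' : k ≠ 0 := hk.ne'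
  have hrne : r ≠ 0 := hr.ne'
  rw [← hrdef]
  field_simp
  linear_combination (-(4 * (c ^ 2 + r ^ 2))) * hr2
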